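/- Let λ, μ ∈ ℝ with λ > μ > 0. Then the stabilizer {U ∈ SU(5) : Uᵀ σ(λ, μ) U = σ(λ, μ)} consists exactly of the block-diagonal matrices diag(A, B, 1) with A, B ∈ SU(2), i.e. matrices U with U_{ij} = A_{ij} for i, j ∈ {1, 2}, U_{ij} = B_{i−2, j−2} for i, j ∈ {3, 4}, U_{55} = 1, and all other entries zero; hence the stabilizer of σ(λ, μ) in SU(5) is isomorphic to SU(2) × SU(2). -/

import Mathlib

noncomputable section

open Matrix

/-- The antisymmetric `5×5` matrix `σ(λ, μ)` representing the 2-form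
`λ e¹∧e² + μ e³∧e⁴` on `ℂ⁵`. -/
def sigmaForm (lam mu : ℝ) : Matrix (Fin 5) (Fin 5) ℂ :=
  (lam : ℂ) • (Matrix.single 0 1 1 - Matrix.single 1 0 1) +
    (mu : ℂ) • (Matrix.single 2 3 1 - Matrix.single 3 2 1)

/-- The block-diagonal matrix `diag(A, B, 1)` with `A, B` of size `2×2`. -/
def blockDiag221 (A B : Matrix (Fin 2) (Fin 2) ℂ) : Matrix (Fin 5) (Fin 5) ℂ := fun i j =>
  if hi : (i : ℕ) < 2 then
    (if hj : (j : ℕ) < 2 then A ⟨(i : ℕ), hi⟩ ⟨(j : ℕ), hj⟩ else 0)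
  else if hi4 : (i : ℕ) < 4 then
    (if hj : (j : ℕ) < 2 then 0
     else if hj4 : (j : ℕ) < 4 then B ⟨(i : ℕ) - 2, by omega⟩ ⟨(j : ℕ) - 2, by omega⟩ else 0)
  else if (j : ℕ) < 4 then 0 else 1

private lemma v2' : ((2:Fin 5):ℕ) = 2 := rfl
private lemma v3' : ((3:Fin 5):ℕ) = 3 := rfl
private lemma v4' : ((4:Fin 5):ℕ) = 4 := rfl

private theorem comm_key (U σ : Matrix (Fin 5) (Fin 5) ℂ)
    (h2 : U * star U = 1)
    (hσ : Uᵀ * σ * U = σ) : U * (σᴴ * σ) = (σᴴ * σ) * U := by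
  have h3 : (Uᵀ)ᴴ * Uᵀ = 1 := by
    have := congrArg transpose h2
    simpa [transpose_mul, Matrix.star_eq_conjTranspose, conjTranspose, transpose_map] using this
  have key : Uᴴ * (σᴴ * σ) * U = σᴴ * σ := by
    conv_rhs => rw [← hσ]
    rw [conjTranspose_mul, conjTranspose_mul]
    rw [show Uᴴ * (σᴴ * (Uᵀ)ᴴ) * (Uᵀ * σ * U) = Uᴴ * σᴴ * ((Uᵀ)ᴴ * Uᵀ) * (σ * U) from by
      noncomm_ring, h3]
    noncomm_ring
  have h2' : U * Uᴴ = 1 := h2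
  calc U * (σᴴ * σ) = U * (Uᴴ * (σᴴ * σ) * U) := by rw [key]
    _ = (U * Uᴴ) * ((σᴴ * σ) * U) := by noncomm_ring
    _ = (σᴴ * σ) * U := by rw [h2']; simp

set_option maxHeartbeats 1600000 in
set_option maxRecDepth 8000 in
/-- for `λ > μ > 0`, the stabilizer of `σ(λ, μ)` in `SU(5)` under the
congruence action consists exactly of the block-diagonal matrices `diag(A, B, 1)` with
`A, B ∈ SU(2)`. -/
theorem stabilizer_sigma_su2_su2 (lam mu : ℝ) (h1 : mu < lam) (h2 : 0 < mu) :
    ∀ U : Matrix (Fin 5) (Fin 5) ℂ,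
      (U ∈ Matrix.specialUnitaryGroup (Fin 5) ℂ ∧
          Uᵀ * sigmaForm lam mu * U = sigmaForm lam mu) ↔
        ∃ A ∈ Matrix.specialUnitaryGroup (Fin 2) ℂ,
          ∃ B ∈ Matrix.specialUnitaryGroup (Fin 2) ℂ, U = blockDiag221 A B := by
  have hl0 : (lam:ℂ) ≠ 0 := by
    exact_mod_cast (show lam ≠ 0 from ne_of_gt (lt_trans h2 h1))
  have hm0 : (mu:ℂ) ≠ 0 := by
    exact_mod_cast (show mu ≠ 0 from ne_of_gt h2)
  have ne1 : ((lam:ℂ)^2) ≠ ((mu:ℂ)^2) := by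
    intro h
    have : lam^2 = mu^2 := by exact_mod_cast h
    nlinarith
  have ne2 : ((lam:ℂ)^2) ≠ 0 := pow_ne_zero _ hl0
  have ne3 : ((mu:ℂ)^2) ≠ 0 := pow_ne_zero _ hm0
  intro U
  constructor
  · rintro ⟨hUs, hσ⟩
    rw [Matrix.mem_specialUnitaryGroup_iff] at hUs
    obtain ⟨hUu, hdet⟩ := hUs
    have hu1 : star U * U = 1 := (Unitary.mem_iff.mp hUu).1
    have hu2 : U * star U = 1 := (Unitary.mem_iff.mp hUu).2
    have hcomm := comm_key U (sigmaForm lam mu) hu2 hσ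
    have hD : (sigmaForm lam mu)ᴴ * sigmaForm lam mu =
        diagonal ![(lam:ℂ)^2, (lam:ℂ)^2, (mu:ℂ)^2, (mu:ℂ)^2, 0] := by
      ext i j
      fin_cases i <;> fin_cases j <;>
        simp [sigmaForm, mul_apply, Fin.sum_univ_five, Matrix.single_apply, diagonal,
          conjTranspose_apply] <;> ring
    rw [hD] at hcomm
    have hzero : ∀ i j : Fin 5,
        (![(lam:ℂ)^2, (lam:ℂ)^2, (mu:ℂ)^2, (mu:ℂ)^2, 0]) i ≠
          (![(lam:ℂ)^2, (lam:ℂ)^2, (mu:ℂ)^2, (mu:ℂ)^2, 0]) j → U i j = 0 := by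
      intro i j hne
      have h := congrFun (congrFun hcomm i) j
      rw [mul_diagonal, diagonal_mul] at h
      have hz : ((![(lam:ℂ)^2, (lam:ℂ)^2, (mu:ℂ)^2, (mu:ℂ)^2, 0]) j -
          (![(lam:ℂ)^2, (lam:ℂ)^2, (mu:ℂ)^2, (mu:ℂ)^2, 0]) i) * U i j = 0 := by
        linear_combination h
      rcases mul_eq_zero.mp hz with h' | h'
      · exact absurd (by linear_combination -h') hne
      · exact h'
    have z02 : U 0 2 = 0 := hzero 0 2 (ne1)
    have z03 : U 0 3 = 0 := hzero 0 3 (ne1)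
    have z04 : U 0 4 = 0 := hzero 0 4 (ne2)
    have z12 : U 1 2 = 0 := hzero 1 2 (ne1)
    have z13 : U 1 3 = 0 := hzero 1 3 (ne1)
    have z14 : U 1 4 = 0 := hzero 1 4 (ne2)
    have z20 : U 2 0 = 0 := hzero 2 0 (ne1.symm)
    have z21 : U 2 1 = 0 := hzero 2 1 (ne1.symm)
    have z24 : U 2 4 = 0 := hzero 2 4 (ne3)
    have z30 : U 3 0 = 0 := hzero 3 0 (ne1.symm)
    have z31 : U 3 1 = 0 := hzero 3 1 (ne1.symm)
    have z34 : U 3 4 = 0 := hzero 3 4 (ne3)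
    have z40 : U 4 0 = 0 := hzero 4 0 (ne2.symm)
    have z41 : U 4 1 = 0 := hzero 4 1 (ne2.symm)
    have z42 : U 4 2 = 0 := hzero 4 2 (ne3.symm)
    have z43 : U 4 3 = 0 := hzero 4 3 (ne3.symm)
    have adet : U 0 0 * U 1 1 - U 0 1 * U 1 0 = 1 := by
      have h := congrFun (congrFun hσ 0) 1
      simp [sigmaForm, mul_apply, Fin.sum_univ_five, Matrix.single_apply,
        z20, z30, z40, z21, z31, z41] at h
      apply mul_left_cancel₀ hl0
      rw [mul_one]
      linear_combination h
    have bdet : U 2 2 * U 3 3 - U 2 3 * U 3 2 = 1 := by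
      have h := congrFun (congrFun hσ 2) 3
      simp [sigmaForm, mul_apply, Fin.sum_univ_five, Matrix.single_apply,
        z02, z12, z42, z03, z13, z43] at h
      apply mul_left_cancel₀ hm0
      rw [mul_one]
      linear_combination h
    have hUeq : U = Matrix.of ![![U 0 0, U 0 1, 0, 0, 0], ![U 1 0, U 1 1, 0, 0, 0],
        ![0, 0, U 2 2, U 2 3, 0], ![0, 0, U 3 2, U 3 3, 0], ![0, 0, 0, 0, U 4 4]] := by
      clear hcomm hσ hu1 hu2 hdet adet bdet hzero
      ext i j
      fin_cases i <;> fin_cases j <;>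
        simp [z02, z03, z04, z12, z13, z14, z20, z21, z24, z30, z31, z34,
          z40, z41, z42, z43, Matrix.vecHead, Matrix.vecTail]
    have hdet' : (U 0 0 * U 1 1 - U 0 1 * U 1 0) *
        ((U 2 2 * U 3 3 - U 2 3 * U 3 2) * U 4 4) = 1 := by
      rw [hUeq] at hdet
      simp [Matrix.det_succ_row_zero, Fin.sum_univ_succ, Fin.succAbove] at hdet
      linear_combination hdet
    have h44 : U 4 4 = 1 := by
      linear_combination hdet' - ((U 2 2 * U 3 3 - U 2 3 * U 3 2) * U 4 4) * adet -
        U 4 4 * bdet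
    refine ⟨!![U 0 0, U 0 1; U 1 0, U 1 1], ?_, !![U 2 2, U 2 3; U 3 2, U 3 3], ?_, ?_⟩
    · rw [Matrix.mem_specialUnitaryGroup_iff]
      constructor
      · rw [Matrix.mem_unitaryGroup_iff']
        ext i j
        fin_cases i <;> fin_cases j
        · have h := congrFun (congrFun hu1 0) 0
          simp [mul_apply, Fin.sum_univ_five, z20, z30, z40] at h
          simpa [mul_apply, Fin.sum_univ_two, Matrix.star_apply] using h
        · have h := congrFun (congrFun hu1 0) 1
          simp [mul_apply, Fin.sum_univ_five, z20, z30, z40, z21, z31, z41] at h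
          simpa [mul_apply, Fin.sum_univ_two, Matrix.star_apply] using h
        · have h := congrFun (congrFun hu1 1) 0
          simp [mul_apply, Fin.sum_univ_five, z20, z30, z40, z21, z31, z41] at h
          simpa [mul_apply, Fin.sum_univ_two, Matrix.star_apply] using h
        · have h := congrFun (congrFun hu1 1) 1
          simp [mul_apply, Fin.sum_univ_five, z21, z31, z41] at h
          simpa [mul_apply, Fin.sum_univ_two, Matrix.star_apply] using h
      · rw [Matrix.det_fin_two]
        simpa using adet
    · rw [Matrix.mem_specialUnitaryGroup_iff]
      constructor
      · rw [Matrix.mem_unitaryGroup_iff']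
        ext i j
        fin_cases i <;> fin_cases j
        · have h := congrFun (congrFun hu1 2) 2
          simp [mul_apply, Fin.sum_univ_five, z02, z12, z42] at h
          simpa [mul_apply, Fin.sum_univ_two, Matrix.star_apply] using h
        · have h := congrFun (congrFun hu1 2) 3
          simp [mul_apply, Fin.sum_univ_five, z02, z12, z42, z03, z13, z43] at h
          simpa [mul_apply, Fin.sum_univ_two, Matrix.star_apply] using h
        · have h := congrFun (congrFun hu1 3) 2
          simp [mul_apply, Fin.sum_univ_five, z02, z12, z42, z03, z13, z43] at h
          simpa [mul_apply, Fin.sum_univ_two, Matrix.star_apply] using h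
        · have h := congrFun (congrFun hu1 3) 3
          simp [mul_apply, Fin.sum_univ_five, z03, z13, z43] at h
          simpa [mul_apply, Fin.sum_univ_two, Matrix.star_apply] using h
      · rw [Matrix.det_fin_two]
        simpa using bdet
    · rw [hUeq, h44]
      ext i j
      fin_cases i <;> fin_cases j <;>
        norm_num [blockDiag221, v2', v3', v4', -Matrix.cons_val'] <;> rfl
  · rintro ⟨A, hA, B, hB, rfl⟩
    rw [Matrix.mem_specialUnitaryGroup_iff] at hA hB
    obtain ⟨hAu, hAd⟩ := hA
    obtain ⟨hBu, hBd⟩ := hB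
    have hA1 : star A * A = 1 := (Unitary.mem_iff.mp hAu).1
    have hB1 : star B * B = 1 := (Unitary.mem_iff.mp hBu).1
    have adet : A 0 0 * A 1 1 - A 0 1 * A 1 0 = 1 := by
      rw [Matrix.det_fin_two] at hAd; linear_combination hAd
    have bdet : B 0 0 * B 1 1 - B 0 1 * B 1 0 = 1 := by
      rw [Matrix.det_fin_two] at hBd; linear_combination hBd
    have a00 := congrFun (congrFun hA1 0) 0
    have a01 := congrFun (congrFun hA1 0) 1
    have a10 := congrFun (congrFun hA1 1) 0
    have a11 := congrFun (congrFun hA1 1) 1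
    have b00 := congrFun (congrFun hB1 0) 0
    have b01 := congrFun (congrFun hB1 0) 1
    have b10 := congrFun (congrFun hB1 1) 0
    have b11 := congrFun (congrFun hB1 1) 1
    simp [mul_apply, Fin.sum_univ_two, Matrix.star_apply, Matrix.one_apply]
      at a00 a01 a10 a11 b00 b01 b10 b11
    constructor
    · rw [Matrix.mem_specialUnitaryGroup_iff]
      constructor
      · rw [Matrix.mem_unitaryGroup_iff']
        ext i j
        fin_cases i <;> fin_cases j <;>
          simp [mul_apply, Fin.sum_univ_five, blockDiag221, Matrix.star_apply,
            Matrix.one_apply, v2', v3', v4'] <;>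
          first
            | linear_combination a00
            | linear_combination a01
            | linear_combination a10
            | linear_combination a11
            | linear_combination b00
            | linear_combination b01
            | linear_combination b10
            | linear_combination b11
      · have hbe : blockDiag221 A B = Matrix.of ![![A 0 0, A 0 1, 0, 0, 0],
            ![A 1 0, A 1 1, 0, 0, 0], ![0, 0, B 0 0, B 0 1, 0],
            ![0, 0, B 1 0, B 1 1, 0], ![0, 0, 0, 0, 1]] := by
          ext i j
          fin_cases i <;> fin_cases j <;> norm_num [blockDiag221, v2', v3', v4']
        rw [hbe]
        simp [Matrix.det_succ_row_zero, Fin.sum_univ_succ, Fin.succAbove]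
        linear_combination (B 0 0 * B 1 1 - B 0 1 * B 1 0) * adet + bdet
    · ext i j
      fin_cases i <;> fin_cases j <;>
        simp [mul_apply, Fin.sum_univ_five, sigmaForm, Matrix.single_apply, blockDiag221,
          v2', v3', v4', Fin.mk_zero, Fin.mk_one] <;>
        first
          | ring1
          | linear_combination (lam:ℂ) * adet
          | linear_combination -(lam:ℂ) * adet
          | linear_combination (mu:ℂ) * bdet
          | linear_combination -(mu:ℂ) * bdet
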